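/- Let f(x) = E_{ξ∼D}[f_ξ(x)] with each f_ξ continuously differentiable, let S be a nonempty set of global minimizers of f, ∅ ≠ S̃ ⊆ S, and suppose there exist L > 0, c₁ > 0, and constants c₂ξ ≥ 0 with ⟨∇f_ξ(x), x − proj_{S̃}(x)⟩ ≥ (c₁/L)‖∇f_ξ(x)‖² − c₂ξ for all x ∈ ℝ^d. Let x^{k+1} = x^k − γ^k ∇f_{ξ^k}(x^k) with ξ^k i.i.d., γ^k = min{c₁/L, γ_b}, γ_b ≥ c₁/L. Then for every K ≥ 0: min_{0≤k≤K} ‖∇f(x^k)‖² ≤ L² E[‖x^0 − x^0_p‖²]/(c₁² (K+1)) + 2 L² γ_b E[c₂ξ]/c₁², where x^0_p := proj_{S̃}(x^0). (Here ‖∇f(x^k)‖² ≤ E_ξ[‖∇f_ξ(x^k)‖²] by Jensen's inequality, and min over k is in expectation.) -/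

import Mathlib

open scoped RealInnerProductSpace
open MeasureTheory

open MeasureTheory Filter Topology Set
open scoped ENNReal NNReal RealInnerProductSpace

section auxlemmas

variable {α : Type*} [MeasurableSpace α]

lemma sgd_aux_sq_integral_le (P : Measure α) [IsProbabilityMeasure P]
    (h : α → ℝ) (h1 : Integrable h P) (h2 : Integrable (fun a => h a ^ 2) P) :
    (∫ a, h a ∂P) ^ 2 ≤ ∫ a, h a ^ 2 ∂P := by
  set c : ℝ := ∫ a, h a ∂P with hc
  have key : 0 ≤ ∫ a, (h a - c) ^ 2 ∂P := integral_nonneg fun a => sq_nonneg _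
  have e1 : (fun a => (h a - c) ^ 2) = fun a => (h a ^ 2 - 2 * c * h a) + c ^ 2 := by
    funext a; ring
  have hI0 : Integrable (fun a => 2 * c * h a) P := h1.const_mul (2 * c)
  have hI1 : Integrable (fun a => h a ^ 2 - 2 * c * h a) P := h2.sub hI0
  rw [e1, integral_add hI1 (integrable_const _),
    integral_sub h2 hI0, integral_const_mul, integral_const,
    probReal_univ] at key
  simp only [ENNReal.toReal_one, one_smul, ← hc] at key
  nlinarith [key]

lemma sgd_aux_nnnorm_integral_sq_le {E : Type*} [NormedAddCommGroup E] [NormedSpace ℝ E]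
    (P : Measure α) [IsProbabilityMeasure P]
    (h : α → E) (hm : AEStronglyMeasurable h P) :
    ((‖(∫ a, h a ∂P)‖₊ : ℝ≥0∞)) ^ 2 ≤ ∫⁻ a, (‖h a‖₊ : ℝ≥0∞) ^ 2 ∂P := by
  by_cases hfin : (∫⁻ a, (‖h a‖₊ : ℝ≥0∞) ^ 2 ∂P) = ⊤
  · rw [hfin]; exact le_top
  · have hnn : ∀ a, (‖(‖h a‖ ^ 2 : ℝ)‖₊ : ℝ≥0∞) = (‖h a‖₊ : ℝ≥0∞) ^ 2 := by
      intro a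
      rw [← ENNReal.coe_pow]
      congr 1
      rw [nnnorm_pow, nnnorm_norm]
    have h2 : Integrable (fun a => ‖h a‖ ^ 2) P := by
      refine ⟨(hm.norm.aemeasurable.pow_const 2).aestronglyMeasurable, ?_⟩
      show (∫⁻ a, (‖(‖h a‖ ^ 2 : ℝ)‖₊ : ℝ≥0∞) ∂P) < ⊤
      simp_rw [hnn]
      exact lt_top_iff_ne_top.2 hfin
    have hg : Integrable (fun a => 1 + ‖h a‖ ^ 2) P := (integrable_const (1:ℝ)).add h2
    have h1 : Integrable (fun a => ‖h a‖) P := by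
      refine Integrable.mono' hg hm.norm (ae_of_all _ ?_)
      intro a
      rw [Real.norm_eq_abs, abs_of_nonneg (norm_nonneg _)]
      nlinarith [sq_nonneg (‖h a‖ - 1)]
    have hr : ‖(∫ a, h a ∂P)‖ ^ 2 ≤ ∫ a, ‖h a‖ ^ 2 ∂P :=
      le_trans (by
        have := norm_integral_le_integral_norm (μ := P) h
        nlinarith [norm_nonneg (∫ a, h a ∂P), integral_nonneg (μ := P) (f := fun a => ‖h a‖) (fun a => norm_nonneg _)])
        (sgd_aux_sq_integral_le P _ h1 h2)
    calc ((‖(∫ a, h a ∂P)‖₊ : ℝ≥0∞)) ^ 2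
        = ENNReal.ofReal (‖(∫ a, h a ∂P)‖ ^ 2) := by
          rw [ENNReal.ofReal_pow (norm_nonneg _), ofReal_norm, enorm_eq_nnnorm]
      _ ≤ ENNReal.ofReal (∫ a, ‖h a‖ ^ 2 ∂P) := ENNReal.ofReal_le_ofReal hr
      _ = ∫⁻ a, (‖h a‖₊ : ℝ≥0∞) ^ 2 ∂P := by
          rw [ofReal_integral_eq_lintegral_ofReal h2 (ae_of_all _ fun a => sq_nonneg _)]
          refine lintegral_congr fun a => ?_
          rw [ENNReal.ofReal_pow (norm_nonneg _), ofReal_norm, enorm_eq_nnnorm]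

end auxlemmas



section aux3

variable {I : Type*} [MeasurableSpace I] {d : ℕ}

local notation "E" => EuclideanSpace ℝ (Fin d)

lemma sgd_aux_closed (V : I → E → E) (hVc : ∀ i, Continuous (V i)) (P : Measure I) :
    IsClosed {y : E | AEStronglyMeasurable (fun i => V i y) P} := by
  apply isClosed_of_closure_subset
  intro y hy
  rcases mem_closure_iff_seq_limit.1 hy with ⟨yn, hyn, hlim⟩
  exact aestronglyMeasurable_of_tendsto_ae atTop (fun n => hyn n)
    (ae_of_all _ fun i => ((hVc i).tendsto y).comp hlim)

lemma sgd_aux_prod_aesm (V : I → E → E) (hVc : ∀ i, Continuous (V i))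
    (P : Measure I) [SFinite P] (Q : Measure E) [SFinite Q] :
    AEStronglyMeasurable
      (fun p : I × E =>
        ({y : E | AEStronglyMeasurable (fun i => V i y) P}).indicator (V p.1) p.2)
      (P.prod Q) := by
  classical
  set Y : Set E := {y : E | AEStronglyMeasurable (fun i => V i y) P} with hYdef
  by_cases hne : Y.Nonempty
  swap
  · have hz : ∀ p : I × E, Y.indicator (V p.1) p.2 = 0 := by
      intro p
      apply indicator_of_notMem
      exact fun h => hne ⟨p.2, h⟩
    have : (fun p : I × E => Y.indicator (V p.1) p.2) = fun _ => (0 : E) := funext hz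
    rw [this]
    exact aestronglyMeasurable_const
  · haveI : Nonempty ↥Y := hne.to_subtype
    obtain ⟨c, hc⟩ := TopologicalSpace.exists_dense_seq ↥Y
    have hcY : ∀ m, AEStronglyMeasurable (fun i => V i ((c m : E))) P := fun m => (c m).2
    -- global measurable null set B outside of which V agrees with measurable versions
    have hae : ∀ᵐ i ∂P, ∀ m, V i (c m) = (hcY m).mk _ i := ae_all_iff.2 fun m => (hcY m).ae_eq_mk
    have hnull : P {i | ¬ ∀ m, V i ((c m : E)) = (hcY m).mk _ i} = 0 := by
      simpa [ae_iff] using hae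
    obtain ⟨B, hBsub, hBmeas, hBnull⟩ := exists_measurable_superset_of_null hnull
    set W : I → E → E := fun i y => if i ∈ B then 0 else V i y with hWdef
    have hWc : ∀ i, Continuous (W i) := by
      intro i
      by_cases hi : i ∈ B <;> simp only [hWdef, hi, if_true, if_false]
      · exact continuous_const
      · exact hVc i
    -- columns at the dense points are measurable
    have hWm : ∀ m, Measurable (fun i => W i ((c m : E))) := by
      intro m
      have : (fun i => W i ((c m : E))) = B.piecewise (fun _ => (0:E)) ((hcY m).mk _) := by
        funext i
        by_cases hi : i ∈ B
        · simp [hWdef, hi, Set.piecewise_eq_of_mem _ _ _ hi]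
        · have hiN : ∀ m, V i ((c m : E)) = (hcY m).mk _ i := by
            by_contra hcon
            exact hi (hBsub hcon)
          simp [hWdef, hi, Set.piecewise_eq_of_notMem _ _ _ hi, hiN m]
      rw [this]
      exact Measurable.piecewise hBmeas measurable_const ((hcY m).stronglyMeasurable_mk).measurable
    -- columns at all points of Y are measurable
    have hWcol : ∀ y : ↥Y, Measurable (fun i => W i (y : E)) := by
      intro y
      have hyc : (y : ↥Y) ∈ closure (Set.range c) := hc.closure_eq ▸ Set.mem_univ y
      rcases mem_closure_iff_seq_limit.1 hyc with ⟨zn, hzn, hzlim⟩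
      choose m hm using hzn
      have hlim2 : ∀ i, Tendsto (fun n => W i ((zn n : E))) atTop (𝓝 (W i (y : E))) := by
        intro i
        exact ((hWc i).tendsto _).comp ((continuous_subtype_val.tendsto _).comp hzlim)
      refine measurable_of_tendsto_metrizable (fun n => ?_) (tendsto_pi_nhds.2 fun i => hlim2 i)
      have : (fun i => W i ((zn n : E))) = fun i => W i ((c (m n) : E)) := by
        rw [hm n]
      rw [this]
      exact hWm (m n)
    -- uncurry measurability on ↥Y × I
    have huncurry : Measurable (Function.uncurry (fun (y : ↥Y) (i : I) => W i (y : E))) :=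
      measurable_uncurry_of_continuous_of_measurable
        (fun i => (hWc i).comp continuous_subtype_val) hWcol
    -- Y is measurable
    have hYmeas : MeasurableSet Y := (sgd_aux_closed V hVc P).measurableSet
    -- the dite extension is measurable
    have hG' : Measurable (fun p : I × E => if h : p.2 ∈ Y then W p.1 p.2 else 0) := by
      refine Measurable.dite (f := fun q : {p : I × E // p.2 ∈ Y} =>
          Function.uncurry (fun (y : ↥Y) (i : I) => W i (y : E)) (⟨q.1.2, q.2⟩, q.1.1)) ?_
        (measurable_const (a := (0:E))) (measurable_snd hYmeas)
      exact huncurry.comp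
        ((((measurable_snd.comp (measurable_subtype_coe)).subtype_mk).prodMk
          (measurable_fst.comp (measurable_subtype_coe))))
    -- almost everywhere, the dite extension equals the indicator of V
    have haeB : ∀ᵐ p ∂(P.prod Q), p.1 ∉ B := by
      rw [ae_iff]
      have hset : {p : I × E | ¬ p.1 ∉ B} = B ×ˢ (Set.univ : Set E) := by
        ext p; simp [Set.mem_prod]
      rw [hset, Measure.prod_prod, hBnull, zero_mul]
    refine hG'.aestronglyMeasurable.congr ?_
    filter_upwards [haeB] with p hp
    by_cases hy : p.2 ∈ Y
    · simp [hy, hWdef, hp, indicator_of_mem hy]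
    · simp [hy, indicator_of_notMem hy]

end aux3

section auxJ

variable {I : Type*} [MeasurableSpace I] {Ω : Type*} [MeasurableSpace Ω] {d : ℕ}

local notation "E" => EuclideanSpace ℝ (Fin d)

lemma sgd_aux_J (μ : Measure Ω) [IsProbabilityMeasure μ] (D : Measure I) [IsProbabilityMeasure D]
    (V : I → E → E) (hVc : ∀ i, Continuous (V i))
    (U : E → E) (hU : Measurable U) (hgrad : ∀ y, U y = ∫ i, V i y ∂D)
    (ξ : Ω → I) (hξ : Measurable ξ) (hlaw : Measure.map ξ μ = D)
    (x : Ω → E) (hx : Measurable x)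
    (hindep : ProbabilityTheory.IndepFun ξ x μ)
    (hint2 : Integrable (fun ω => ‖V (ξ ω) (x ω)‖ ^ 2) μ) :
    ∫ ω, ‖U (x ω)‖ ^ 2 ∂μ ≤ ∫ ω, ‖V (ξ ω) (x ω)‖ ^ 2 ∂μ := by
  classical
  set ν : Measure E := Measure.map x μ with hν
  haveI : IsProbabilityMeasure ν := Measure.isProbabilityMeasure_map hx.aemeasurable
  have hprodlaw : Measure.map (fun ω => (ξ ω, x ω)) μ = D.prod ν := by
    rw [← hlaw]
    exact (ProbabilityTheory.indepFun_iff_map_prod_eq_prod_map_map hξ.aemeasurable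
      hx.aemeasurable).mp hindep
  set Y : Set E := {y : E | AEStronglyMeasurable (fun i => V i y) D} with hYdef
  set G : I × E → E := fun p => Y.indicator (V p.1) p.2 with hGdef
  have hG : AEStronglyMeasurable G (D.prod ν) := sgd_aux_prod_aesm V hVc D ν
  have hG2 : AEMeasurable (fun p : I × E => ((‖G p‖₊ : ℝ≥0∞)) ^ 2) (D.prod ν) :=
    hG.enorm.pow_const 2
  -- U vanishes outside Y
  have hUzero : ∀ y ∉ Y, U y = 0 := by
    intro y hy
    rw [hgrad y]
    exact integral_undef fun hInt => hy hInt.aestronglyMeasurable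
  -- pointwise Jensen
  have hpt : ∀ y : E, ((‖U y‖₊ : ℝ≥0∞)) ^ 2 ≤ ∫⁻ i, ((‖G (i, y)‖₊ : ℝ≥0∞)) ^ 2 ∂D := by
    intro y
    by_cases hy : y ∈ Y
    · have hGy : ∀ i, G (i, y) = V i y := fun i => indicator_of_mem hy _
      have := sgd_aux_nnnorm_integral_sq_le D (fun i => V i y) hy
      rw [← hgrad y] at this
      refine le_trans this (le_of_eq ?_)
      exact lintegral_congr fun i => by rw [hGy i]
    · rw [hUzero y hy]
      simp
  -- ENNReal chain
  have hUm2 : Measurable fun y : E => ((‖U y‖₊ : ℝ≥0∞)) ^ 2 :=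
    (hU.nnnorm.coe_nnreal_ennreal).pow_const 2
  have hchain : ∫⁻ ω, ((‖U (x ω)‖₊ : ℝ≥0∞)) ^ 2 ∂μ
      ≤ ∫⁻ ω, ((‖V (ξ ω) (x ω)‖₊ : ℝ≥0∞)) ^ 2 ∂μ := by
    have step1 : ∫⁻ ω, ((‖U (x ω)‖₊ : ℝ≥0∞)) ^ 2 ∂μ = ∫⁻ y, ((‖U y‖₊ : ℝ≥0∞)) ^ 2 ∂ν := by
      rw [hν, lintegral_map hUm2 hx]
    have step3 : ∫⁻ y, (∫⁻ i, ((‖G (i, y)‖₊ : ℝ≥0∞)) ^ 2 ∂D) ∂ν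
        = ∫⁻ p, ((‖G p‖₊ : ℝ≥0∞)) ^ 2 ∂(D.prod ν) :=
      (lintegral_prod_symm _ hG2).symm
    have step4 : ∫⁻ p, ((‖G p‖₊ : ℝ≥0∞)) ^ 2 ∂(D.prod ν)
        = ∫⁻ ω, ((‖G (ξ ω, x ω)‖₊ : ℝ≥0∞)) ^ 2 ∂μ := by
      rw [← hprodlaw]
      exact lintegral_map' (by rw [hprodlaw]; exact hG2) (hξ.prodMk hx).aemeasurable
    have step5 : ∫⁻ ω, ((‖G (ξ ω, x ω)‖₊ : ℝ≥0∞)) ^ 2 ∂μ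
        ≤ ∫⁻ ω, ((‖V (ξ ω) (x ω)‖₊ : ℝ≥0∞)) ^ 2 ∂μ := by
      refine lintegral_mono fun ω => ?_
      by_cases hy : x ω ∈ Y
      · rw [hGdef]; simp only [indicator_of_mem hy]; exact le_rfl
      · rw [hGdef]; simp only [indicator_of_notMem hy]; simp
    calc ∫⁻ ω, ((‖U (x ω)‖₊ : ℝ≥0∞)) ^ 2 ∂μ
        = ∫⁻ y, ((‖U y‖₊ : ℝ≥0∞)) ^ 2 ∂ν := step1
      _ ≤ ∫⁻ y, (∫⁻ i, ((‖G (i, y)‖₊ : ℝ≥0∞)) ^ 2 ∂D) ∂ν := lintegral_mono fun y => hpt y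
      _ = ∫⁻ p, ((‖G p‖₊ : ℝ≥0∞)) ^ 2 ∂(D.prod ν) := step3
      _ = ∫⁻ ω, ((‖G (ξ ω, x ω)‖₊ : ℝ≥0∞)) ^ 2 ∂μ := step4
      _ ≤ ∫⁻ ω, ((‖V (ξ ω) (x ω)‖₊ : ℝ≥0∞)) ^ 2 ∂μ := step5
  -- convert to real integrals
  have hone : ∀ (z : E), ENNReal.ofReal (‖z‖ ^ 2) = ((‖z‖₊ : ℝ≥0∞)) ^ 2 := by
    intro z
    rw [ENNReal.ofReal_pow (norm_nonneg _), ofReal_norm, enorm_eq_nnnorm]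
  have hL1 : ∫ ω, ‖U (x ω)‖ ^ 2 ∂μ = (∫⁻ ω, ((‖U (x ω)‖₊ : ℝ≥0∞)) ^ 2 ∂μ).toReal := by
    rw [integral_eq_lintegral_of_nonneg_ae (f := fun ω => ‖U (x ω)‖ ^ 2) (ae_of_all _ fun ω => sq_nonneg _)
      ((((hU.comp hx).norm.pow_const 2).aestronglyMeasurable) : AEStronglyMeasurable (fun ω => ‖U (x ω)‖ ^ 2) μ)]
    congr 1
    exact lintegral_congr fun ω => hone _
  have hL2 : ∫ ω, ‖V (ξ ω) (x ω)‖ ^ 2 ∂μ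
      = (∫⁻ ω, ((‖V (ξ ω) (x ω)‖₊ : ℝ≥0∞)) ^ 2 ∂μ).toReal := by
    rw [integral_eq_lintegral_of_nonneg_ae (f := fun ω => ‖V (ξ ω) (x ω)‖ ^ 2) (ae_of_all _ fun ω => sq_nonneg _)
      hint2.aestronglyMeasurable]
    congr 1
    exact lintegral_congr fun ω => hone _
  have hfin : (∫⁻ ω, ((‖V (ξ ω) (x ω)‖₊ : ℝ≥0∞)) ^ 2 ∂μ) ≠ ⊤ := by
    have h2 := hint2.2
    rw [hasFiniteIntegral_iff_norm] at h2
    refine ne_of_lt (lt_of_le_of_lt (le_of_eq ?_) h2)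
    refine lintegral_congr fun ω => ?_
    rw [← hone]
    congr 1
    rw [Real.norm_eq_abs, abs_of_nonneg (sq_nonneg _)]
  rw [hL1, hL2]
  exact ENNReal.toReal_mono hfin hchain

end auxJ

/-- Example 7: per-sample unified parametric assumption with progress function
`P_ξ(x) = (1/L)‖∇f_ξ(x)‖²`; SGD with the constant stepsize `min(c₁/L, γ_b) = c₁/L`
achieves an `O(1/K)` rate for the minimum expected squared gradient norm of `f`,
up to the neighborhood `2L²γ_b E[c₂_ξ]/c₁²`. -/
theorem sgd_gradient_norm_rate
    {d : ℕ} {I : Type*} [MeasurableSpace I]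
    {Ω : Type*} [MeasurableSpace Ω] (μ : Measure Ω) [IsProbabilityMeasure μ]
    (D : Measure I) [IsProbabilityMeasure D]
    (f : I → EuclideanSpace ℝ (Fin d) → ℝ)
    (hf : ∀ i, ContDiff ℝ 1 (f i))
    (fbar : EuclideanSpace ℝ (Fin d) → ℝ)
    (hfbar : ∀ y, fbar y = ∫ i, f i y ∂D)
    (hgrad : ∀ y, gradient fbar y = ∫ i, gradient (f i) y ∂D)
    (S St : Set (EuclideanSpace ℝ (Fin d)))
    (hSne : S.Nonempty)
    (hSmin : ∀ s ∈ S, ∀ y, fbar s ≤ fbar y)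
    (hStS : St ⊆ S) (hStne : St.Nonempty)
    (proj : EuclideanSpace ℝ (Fin d) → EuclideanSpace ℝ (Fin d))
    (hproj : ∀ y, proj y ∈ St ∧ ∀ z ∈ St, ‖y - proj y‖ ≤ ‖y - z‖)
    (L c₁ : ℝ) (hL : 0 < L) (hc₁ : 0 < c₁)
    (c₂ : I → ℝ) (hc₂ : ∀ i, 0 ≤ c₂ i)
    (hass : ∀ i y, c₁ / L * ‖gradient (f i) y‖ ^ 2 - c₂ i ≤ ⟪gradient (f i) y, y - proj y⟫)
    (ξ : ℕ → Ω → I) (hξmeas : ∀ k, Measurable (ξ k))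
    (hiid : ∀ k, Measure.map (ξ k) μ = D)
    (x : ℕ → Ω → EuclideanSpace ℝ (Fin d)) (hxmeas : ∀ k, Measurable (x k))
    (hindep : ∀ k, ProbabilityTheory.IndepFun (ξ k) (x k) μ)
    (γ : ℕ → Ω → ℝ) (γb : ℝ) (hγb : c₁ / L ≤ γb)
    (hupd : ∀ k ω, x (k + 1) ω = x k ω - γ k ω • gradient (f (ξ k ω)) (x k ω))
    (hγ : ∀ k ω, γ k ω = min (c₁ / L) γb)
    (hint1 : ∀ k, Integrable (fun ω => ‖x k ω - proj (x k ω)‖ ^ 2) μ)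
    (hint2 : ∀ k, Integrable (fun ω => ‖gradient (f (ξ k ω)) (x k ω)‖ ^ 2) μ)
    (hint3 : ∀ k, Integrable (fun ω => ‖gradient fbar (x k ω)‖ ^ 2) μ)
    (hint4 : Integrable c₂ D)
    (K : ℕ) :
    (Finset.range (K + 1)).inf' Finset.nonempty_range_add_one
        (fun k => ∫ ω, ‖gradient fbar (x k ω)‖ ^ 2 ∂μ) ≤
      L ^ 2 * (∫ ω, ‖x 0 ω - proj (x 0 ω)‖ ^ 2 ∂μ) / (c₁ ^ 2 * (K + 1))
      + 2 * L ^ 2 * γb * (∫ i, c₂ i ∂D) / c₁ ^ 2 := by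
  classical
  -- measurability / continuity of gradients
  have hUmeas : Measurable (gradient fbar) := by
    have hrfl : gradient fbar = fun y =>
        (InnerProductSpace.toDual ℝ (EuclideanSpace ℝ (Fin d))).symm (fderiv ℝ fbar y) := rfl
    rw [hrfl]
    exact ((InnerProductSpace.toDual ℝ
      (EuclideanSpace ℝ (Fin d))).symm.continuous.measurable).comp (measurable_fderiv ℝ fbar)
  have hVc : ∀ i, Continuous (gradient (f i)) := by
    intro i
    have hrfl : gradient (f i) = fun y =>
        (InnerProductSpace.toDual ℝ (EuclideanSpace ℝ (Fin d))).symm (fderiv ℝ (f i) y) := rfl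
    rw [hrfl]
    exact (InnerProductSpace.toDual ℝ
      (EuclideanSpace ℝ (Fin d))).symm.continuous.comp ((hf i).continuous_fderiv one_ne_zero)
  -- Step J : expected Jensen via independence
  have hJ : ∀ k, (∫ ω, ‖gradient fbar (x k ω)‖ ^ 2 ∂μ)
      ≤ ∫ ω, ‖gradient (f (ξ k ω)) (x k ω)‖ ^ 2 ∂μ := by
    intro k
    exact sgd_aux_J μ D (fun i => gradient (f i)) hVc (gradient fbar) hUmeas hgrad
      (ξ k) (hξmeas k) (hiid k) (x k) (hxmeas k) (hindep k) (hint2 k)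
  -- the stepsize is constant
  have hγ0 : (0:ℝ) < c₁ / L := div_pos hc₁ hL
  have hγeq : ∀ k ω, γ k ω = c₁ / L := fun k ω => by rw [hγ k ω]; exact min_eq_left hγb
  -- pointwise recursion
  have hptA : ∀ k ω, ‖x (k+1) ω - proj (x (k+1) ω)‖ ^ 2
      ≤ ‖x k ω - proj (x k ω)‖ ^ 2
        - (c₁/L) ^ 2 * ‖gradient (f (ξ k ω)) (x k ω)‖ ^ 2 + 2 * (c₁/L) * c₂ (ξ k ω) := by
    intro k ω
    have h1 : ‖x (k+1) ω - proj (x (k+1) ω)‖ ≤ ‖x (k+1) ω - proj (x k ω)‖ :=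
      (hproj (x (k+1) ω)).2 _ (hproj (x k ω)).1
    have h2 : x (k+1) ω - proj (x k ω)
        = (x k ω - proj (x k ω)) - (c₁/L) • gradient (f (ξ k ω)) (x k ω) := by
      rw [hupd k ω, hγeq k ω, sub_right_comm]
    have h3 : ‖(x k ω - proj (x k ω)) - (c₁/L) • gradient (f (ξ k ω)) (x k ω)‖ ^ 2
        = ‖x k ω - proj (x k ω)‖ ^ 2
          - 2 * (c₁/L) * ⟪gradient (f (ξ k ω)) (x k ω), x k ω - proj (x k ω)⟫
          + (c₁/L) ^ 2 * ‖gradient (f (ξ k ω)) (x k ω)‖ ^ 2 := by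
      rw [norm_sub_sq_real, real_inner_smul_right, norm_smul, mul_pow, Real.norm_eq_abs,
        sq_abs, real_inner_comm (x k ω - proj (x k ω)) (gradient (f (ξ k ω)) (x k ω))]
      ring
    have h4 := hass (ξ k ω) (x k ω)
    have h5 : ‖x (k+1) ω - proj (x (k+1) ω)‖ ^ 2
        ≤ ‖(x k ω - proj (x k ω)) - (c₁/L) • gradient (f (ξ k ω)) (x k ω)‖ ^ 2 := by
      rw [← h2]; exact pow_le_pow_left₀ (norm_nonneg _) h1 2
    rw [h3] at h5
    have h6 := mul_le_mul_of_nonneg_left h4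
      (le_of_lt (by positivity : (0:ℝ) < 2 * (c₁/L)))
    linarith [h5, h6]
  -- integrability and identification of the noise term
  have hc2i : ∀ k, Integrable (fun ω => c₂ (ξ k ω)) μ := by
    intro k
    have h1 : AEStronglyMeasurable c₂ (Measure.map (ξ k) μ) := by
      rw [hiid k]; exact hint4.aestronglyMeasurable
    have h2 : Integrable c₂ (Measure.map (ξ k) μ) := by rw [hiid k]; exact hint4
    exact (integrable_map_measure h1 (hξmeas k).aemeasurable).mp h2
  have hc2eq : ∀ k, ∫ ω, c₂ (ξ k ω) ∂μ = ∫ i, c₂ i ∂D := by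
    intro k
    conv_rhs => rw [← hiid k]
    rw [integral_map (hξmeas k).aemeasurable
      (by rw [hiid k]; exact hint4.aestronglyMeasurable)]
  -- integrated recursion
  have hrec : ∀ k, (∫ ω, ‖x (k+1) ω - proj (x (k+1) ω)‖ ^ 2 ∂μ)
      ≤ (∫ ω, ‖x k ω - proj (x k ω)‖ ^ 2 ∂μ)
        - (c₁/L) ^ 2 * (∫ ω, ‖gradient (f (ξ k ω)) (x k ω)‖ ^ 2 ∂μ)
        + 2 * (c₁/L) * (∫ i, c₂ i ∂D) := by
    intro k
    have hIa : Integrable (fun ω => (c₁/L) ^ 2 * ‖gradient (f (ξ k ω)) (x k ω)‖ ^ 2) μ :=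
      (hint2 k).const_mul _
    have hIb : Integrable (fun ω => ‖x k ω - proj (x k ω)‖ ^ 2
        - (c₁/L) ^ 2 * ‖gradient (f (ξ k ω)) (x k ω)‖ ^ 2) μ := (hint1 k).sub hIa
    have hIc : Integrable (fun ω => 2 * (c₁/L) * c₂ (ξ k ω)) μ := (hc2i k).const_mul _
    have hIbc : Integrable (fun ω => ‖x k ω - proj (x k ω)‖ ^ 2
        - (c₁/L) ^ 2 * ‖gradient (f (ξ k ω)) (x k ω)‖ ^ 2
        + 2 * (c₁/L) * c₂ (ξ k ω)) μ := hIb.add hIc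
    have hmono := integral_mono (hint1 (k+1)) hIbc (fun ω => hptA k ω)
    rwa [integral_add hIb hIc, integral_sub (hint1 k) hIa, integral_const_mul,
      integral_const_mul, hc2eq k] at hmono
  -- telescoping
  have hkey : ∀ n : ℕ, (∫ ω, ‖x n ω - proj (x n ω)‖ ^ 2 ∂μ)
      + (c₁/L) ^ 2 * ∑ k ∈ Finset.range n, (∫ ω, ‖gradient (f (ξ k ω)) (x k ω)‖ ^ 2 ∂μ)
      ≤ (∫ ω, ‖x 0 ω - proj (x 0 ω)‖ ^ 2 ∂μ) + 2 * (c₁/L) * (∫ i, c₂ i ∂D) * (n:ℝ) := by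
    intro n
    induction n with
    | zero => simp
    | succ n ih =>
      have h := hrec n
      rw [Finset.sum_range_succ, mul_add]
      push_cast
      push_cast at ih
      linarith [h, ih]
  -- assemble
  set A0 : ℝ := ∫ ω, ‖x 0 ω - proj (x 0 ω)‖ ^ 2 ∂μ with hA0
  set CB : ℝ := ∫ i, c₂ i ∂D with hCB
  set M : ℝ := (Finset.range (K + 1)).inf' Finset.nonempty_range_add_one
      (fun k => ∫ ω, ‖gradient fbar (x k ω)‖ ^ 2 ∂μ) with hM
  have hMle : ((K:ℝ) + 1) * M
      ≤ ∑ k ∈ Finset.range (K+1), (∫ ω, ‖gradient fbar (x k ω)‖ ^ 2 ∂μ) := by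
    have hcard := Finset.card_nsmul_le_sum (Finset.range (K+1))
      (fun k => ∫ ω, ‖gradient fbar (x k ω)‖ ^ 2 ∂μ) M
      (fun k hk => Finset.inf'_le _ hk)
    rw [Finset.card_range, nsmul_eq_mul] at hcard
    push_cast at hcard
    exact hcard
  have hsum2 : ∑ k ∈ Finset.range (K+1), (∫ ω, ‖gradient fbar (x k ω)‖ ^ 2 ∂μ)
      ≤ ∑ k ∈ Finset.range (K+1), (∫ ω, ‖gradient (f (ξ k ω)) (x k ω)‖ ^ 2 ∂μ) :=
    Finset.sum_le_sum fun k _ => hJ k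
  have haK : 0 ≤ ∫ ω, ‖x (K+1) ω - proj (x (K+1) ω)‖ ^ 2 ∂μ :=
    integral_nonneg fun ω => sq_nonneg _
  have hcb : 0 ≤ CB := integral_nonneg hc₂
  have hkey2 := hkey (K+1)
  push_cast at hkey2
  have hfinal : (c₁/L) ^ 2 * (((K:ℝ) + 1) * M) ≤ A0 + 2 * (c₁/L) * CB * ((K:ℝ)+1) := by
    have hsq : (0:ℝ) ≤ (c₁/L)^2 := sq_nonneg _
    have h1 : (c₁/L) ^ 2 * (((K:ℝ) + 1) * M)
        ≤ (c₁/L) ^ 2 * ∑ k ∈ Finset.range (K+1),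
            (∫ ω, ‖gradient (f (ξ k ω)) (x k ω)‖ ^ 2 ∂μ) :=
      mul_le_mul_of_nonneg_left (hMle.trans hsum2) hsq
    linarith [h1, hkey2, haK]
  -- final algebra
  have hKpos : (0:ℝ) < (K:ℝ) + 1 := by positivity
  have hLne : L ≠ 0 := ne_of_gt hL
  have hcne : c₁ ≠ 0 := ne_of_gt hc₁
  have hsplit : (A0 + 2 * (c₁/L) * CB * ((K:ℝ)+1)) / ((c₁/L) ^ 2 * ((K:ℝ)+1))
      = L ^ 2 * A0 / (c₁ ^ 2 * ((K:ℝ)+1)) + 2 * L * CB / c₁ := by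
    field_simp
  have hMbound : M ≤ L ^ 2 * A0 / (c₁ ^ 2 * ((K:ℝ)+1)) + 2 * L * CB / c₁ := by
    rw [← hsplit, le_div_iff₀ (by positivity : (0:ℝ) < (c₁/L) ^ 2 * ((K:ℝ)+1))]
    nlinarith [hfinal]
  have h2term : 2 * L * CB / c₁ ≤ 2 * L ^ 2 * γb * CB / c₁ ^ 2 := by
    rw [div_le_div_iff₀ (by positivity) (by positivity)]
    have hc₁L : c₁ ≤ γb * L := (div_le_iff₀ hL).mp hγb
    have hnn : (0:ℝ) ≤ 2 * L * CB * c₁ :=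
      mul_nonneg (mul_nonneg (mul_nonneg (by norm_num) hL.le) hcb) hc₁.le
    have hmul := mul_le_mul_of_nonneg_left hc₁L hnn
    nlinarith [hmul]
  calc M ≤ L ^ 2 * A0 / (c₁ ^ 2 * ((K:ℝ)+1)) + 2 * L * CB / c₁ := hMbound
    _ ≤ L ^ 2 * A0 / (c₁ ^ 2 * ((K:ℝ)+1)) + 2 * L ^ 2 * γb * CB / c₁ ^ 2 := by
        linarith [h2term]
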